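/- In model M1 with independent symmetric innovations, for any supermodular and convex φ : ℝ^{n+1} → ℝ and any k, the function h_k(x) = E[φ(X₀, X₁, ..., X_n) | ε_k = x] is convex in x. -/

import Mathlib

open MeasureTheory ProbabilityTheory Set Finset

/-- A function `φ : (Fin n → ℝ) → ℝ` is supermodular if
`φ(x) + φ(y) ≤ φ(x ⊓ y) + φ(x ⊔ y)` for all `x, y`. -/
def Supermodular {n : ℕ} (φ : (Fin n → ℝ) → ℝ) : Prop :=
  ∀ x y : Fin n → ℝ, φ x + φ y ≤ φ (x ⊓ y) + φ (x ⊔ y)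

section auxiliary

lemma aux_slope {g : ℝ → ℝ} (hg : ConvexOn ℝ (Set.Ici 0) g)
    (hmono : MonotoneOn g (Set.Ici 0))
    {v u A B : ℝ} (hv : 0 ≤ v) (hvu : v ≤ u) (hA : g (u + 1) ≤ A) (hB : B ≤ g v) :
    g u - g v ≤ (u - v) * (A - B) := by
  have hu : 0 ≤ u := hv.trans hvu
  set lam := (u - v) / (u + 1 - v) with hlam
  have hden0 : (0:ℝ) < u + 1 - v := by linarith
  have hlam0 : 0 ≤ lam := div_nonneg (by linarith) hden0.le
  have hlam1 : lam ≤ u - v := div_le_self (by linarith) (by linarith)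
  have hlmul : lam * (u + 1 - v) = u - v := div_mul_cancel₀ _ hden0.ne'
  have hcomb : (1 - lam) • v + lam • (u + 1) = u := by
    simp only [smul_eq_mul]; nlinarith [hlmul]
  have hcx := hg.2 (Set.mem_Ici.2 hv) (Set.mem_Ici.2 (by linarith : (0:ℝ) ≤ u + 1))
    (by nlinarith [hlmul] : (0:ℝ) ≤ 1 - lam) hlam0 (by ring)
  rw [hcomb] at hcx
  simp only [smul_eq_mul] at hcx
  have hmono' : g v ≤ g (u + 1) :=
    hmono (Set.mem_Ici.2 hv) (Set.mem_Ici.2 (by linarith)) (by linarith)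
  nlinarith [mul_nonneg (sub_nonneg.2 hlam1) (sub_nonneg.2 hmono'),
    mul_nonneg (sub_nonneg.2 hvu) (sub_nonneg.2 (hA.trans' hmono' |>.trans' hB : B ≤ A)),
    mul_le_mul_of_nonneg_left (sub_le_sub hA hB) (sub_nonneg.2 hvu)]

lemma aux_cont (f : ℝ → ℝ → ℝ)
    (hf_mono : MonotoneOn (fun p : ℝ × ℝ => f p.1 p.2) (Set.Ici 0 ×ˢ Set.Ici 0))
    (hf_cx1 : ∀ y ∈ Set.Ici (0:ℝ), ConvexOn ℝ (Set.Ici (0:ℝ)) (fun x => f x y))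
    (hf_cx2 : ∀ x ∈ Set.Ici (0:ℝ), ConvexOn ℝ (Set.Ici (0:ℝ)) (fun y => f x y)) :
    ContinuousOn (fun p : ℝ × ℝ => f p.1 p.2) (Set.Ici 0 ×ˢ Set.Ici 0) := by
  have hmem : ∀ {u w : ℝ}, 0 ≤ u → 0 ≤ w → (u, w) ∈ Set.Ici (0:ℝ) ×ˢ Set.Ici (0:ℝ) :=
    fun hu hw => Set.mem_prod.2 ⟨Set.mem_Ici.2 hu, Set.mem_Ici.2 hw⟩
  have hmono2 : ∀ {u w u' w' : ℝ}, 0 ≤ u → 0 ≤ w → u ≤ u' → w ≤ w' → f u w ≤ f u' w' :=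
    fun hu hw h1 h2 => hf_mono (hmem hu hw) (hmem (hu.trans h1) (hw.trans h2))
      (Prod.mk_le_mk.2 ⟨h1, h2⟩)
  have hsec1 : ∀ y : ℝ, 0 ≤ y → MonotoneOn (fun x => f x y) (Set.Ici 0) :=
    fun y hy u hu w hw huw => hmono2 hu hy huw le_rfl
  have hsec2 : ∀ x : ℝ, 0 ≤ x → MonotoneOn (fun y => f x y) (Set.Ici 0) :=
    fun x hx u hu w hw huw => hmono2 hx hu le_rfl huw
  rintro ⟨x₀, y₀⟩ hp
  obtain ⟨hx₀, hy₀⟩ : (0:ℝ) ≤ x₀ ∧ (0:ℝ) ≤ y₀ := ⟨hp.1, hp.2⟩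
  rw [Metric.continuousWithinAt_iff]
  intro ep hep
  set M := f (x₀ + 2) (y₀ + 2) with hM
  set B := f 0 0 with hB
  have hBM : B ≤ M := hmono2 le_rfl le_rfl (by linarith) (by linarith)
  set C := M - B with hC
  have hC0 : 0 ≤ C := by linarith
  set δ := min 1 (ep / (4 * (C + 1))) with hδ
  have hδ0 : 0 < δ := lt_min one_pos (div_pos hep (by positivity))
  have hδ1 : δ ≤ 1 := min_le_left _ _
  have hδe : δ ≤ ep / (4 * (C + 1)) := min_le_right _ _
  refine ⟨δ, hδ0, ?_⟩
  rintro ⟨x, y⟩ hq hdist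
  obtain ⟨hx, hy⟩ : (0:ℝ) ≤ x ∧ (0:ℝ) ≤ y := ⟨hq.1, hq.2⟩
  simp only [Prod.dist_eq, Real.dist_eq, max_lt_iff] at hdist
  have hdx : |x - x₀| < δ := hdist.1
  have hdy : |y - y₀| < δ := hdist.2
  rw [Real.dist_eq]
  have hxu : x ≤ x₀ + δ := by cases abs_lt.1 hdx; linarith
  have hxl : x₀ - δ ≤ x := by cases abs_lt.1 hdx; linarith
  have hyu : y ≤ y₀ + δ := by cases abs_lt.1 hdy; linarith
  have hyl : y₀ - δ ≤ y := by cases abs_lt.1 hdy; linarith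
  have key_up : f x y - f x₀ y₀ ≤ 2 * (δ * C) := by
    have h1 : f x y ≤ f (x₀ + δ) (y₀ + δ) := hmono2 hx hy hxu hyu
    have h2 : f (x₀ + δ) (y₀ + δ) - f x₀ (y₀ + δ) ≤ δ * C := by
      have := aux_slope (hf_cx1 (y₀ + δ) (Set.mem_Ici.2 (by linarith)))
        (hsec1 (y₀ + δ) (by linarith)) hx₀ (by linarith : x₀ ≤ x₀ + δ)
        (hmono2 (by linarith) (by linarith) (by linarith) (by linarith) :
          f (x₀ + δ + 1) (y₀ + δ) ≤ M)
        (hmono2 le_rfl le_rfl hx₀ (by linarith) : B ≤ f x₀ (y₀ + δ))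
      have h' : x₀ + δ - x₀ = δ := by ring
      rw [h'] at this; exact this
    have h3 : f x₀ (y₀ + δ) - f x₀ y₀ ≤ δ * C := by
      have := aux_slope (hf_cx2 x₀ (Set.mem_Ici.2 hx₀)) (hsec2 x₀ hx₀) hy₀
        (by linarith : y₀ ≤ y₀ + δ)
        (hmono2 hx₀ (by linarith) (by linarith) (by linarith) : f x₀ (y₀ + δ + 1) ≤ M)
        (hmono2 le_rfl le_rfl hx₀ hy₀ : B ≤ f x₀ y₀)
      have h' : y₀ + δ - y₀ = δ := by ring
      rw [h'] at this; exact this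
    linarith
  have key_dn : f x₀ y₀ - f x y ≤ 2 * (δ * C) := by
    set x₁ := max (x₀ - δ) 0 with hx₁
    set y₁ := max (y₀ - δ) 0 with hy₁
    have hx₁0 : 0 ≤ x₁ := le_max_right _ _
    have hy₁0 : 0 ≤ y₁ := le_max_right _ _
    have hx₁le : x₁ ≤ x₀ := max_le (by linarith) hx₀
    have hy₁le : y₁ ≤ y₀ := max_le (by linarith) hy₀
    have hx₁δ : x₀ - x₁ ≤ δ := by have := le_max_left (x₀ - δ) 0; linarith
    have hy₁δ : y₀ - y₁ ≤ δ := by have := le_max_left (y₀ - δ) 0; linarith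
    have h4 : f x₁ y₁ ≤ f x y :=
      hmono2 hx₁0 hy₁0 (max_le (by linarith) hx) (max_le (by linarith) hy)
    have h5 : f x₀ y₀ - f x₁ y₀ ≤ δ * C := by
      have := aux_slope (hf_cx1 y₀ (Set.mem_Ici.2 hy₀)) (hsec1 y₀ hy₀) hx₁0 hx₁le
        (hmono2 (by linarith) hy₀ (by linarith) (by linarith) : f (x₀ + 1) y₀ ≤ M)
        (hmono2 le_rfl le_rfl hx₁0 hy₀ : B ≤ f x₁ y₀)
      calc f x₀ y₀ - f x₁ y₀ ≤ (x₀ - x₁) * (M - B) := this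
        _ ≤ δ * C := by rw [hC]; exact mul_le_mul_of_nonneg_right hx₁δ (by linarith)
    have h6 : f x₁ y₀ - f x₁ y₁ ≤ δ * C := by
      have := aux_slope (hf_cx2 x₁ (Set.mem_Ici.2 hx₁0)) (hsec2 x₁ hx₁0) hy₁0 hy₁le
        (hmono2 hx₁0 (by linarith) (by linarith) (by linarith) : f x₁ (y₀ + 1) ≤ M)
        (hmono2 le_rfl le_rfl hx₁0 hy₁0 : B ≤ f x₁ y₁)
      calc f x₁ y₀ - f x₁ y₁ ≤ (y₀ - y₁) * (M - B) := this
        _ ≤ δ * C := by rw [hC]; exact mul_le_mul_of_nonneg_right hy₁δ (by linarith)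
    linarith
  have habs : |f x y - f x₀ y₀| ≤ 2 * (δ * C) := abs_le.2 ⟨by linarith, key_up⟩
  have hfin : 2 * (δ * C) < ep := by
    have h4 : δ * (4 * (C + 1)) ≤ ep := (le_div_iff₀ (by positivity)).1 hδe
    nlinarith [mul_nonneg hδ0.le hC0]
  exact habs.trans_lt hfin

lemma aux_pair {N : ℕ} (φ : (Fin N → ℝ) → ℝ) (hφcx : ConvexOn ℝ Set.univ φ)
    (y : Fin N → ℝ) (j : Fin N) {p q t : ℝ} (ht0 : 0 ≤ t) (ht1 : t ≤ 1) (hpq : p = t * q) :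
    φ (Function.update y j p) + φ (Function.update y j (-p)) ≤
      φ (Function.update y j q) + φ (Function.update y j (-q)) := by
  have ha : (0:ℝ) ≤ (1 + t) / 2 := by linarith
  have hb : (0:ℝ) ≤ (1 - t) / 2 := by linarith
  have e1 : Function.update y j p =
      ((1 + t) / 2) • Function.update y j q + ((1 - t) / 2) • Function.update y j (-q) := by
    funext i
    by_cases hij : i = j
    · rw [hij]
      simp only [Pi.add_apply, Pi.smul_apply, Function.update_self, smul_eq_mul, hpq]; ring
    · simp only [Pi.add_apply, Pi.smul_apply, Function.update_of_ne hij, smul_eq_mul]; ring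
  have e2 : Function.update y j (-p) =
      ((1 - t) / 2) • Function.update y j q + ((1 + t) / 2) • Function.update y j (-q) := by
    funext i
    by_cases hij : i = j
    · rw [hij]
      simp only [Pi.add_apply, Pi.smul_apply, Function.update_self, smul_eq_mul, hpq]; ring
    · simp only [Pi.add_apply, Pi.smul_apply, Function.update_of_ne hij, smul_eq_mul]; ring
  have c1 := hφcx.2 (Set.mem_univ (Function.update y j q))
    (Set.mem_univ (Function.update y j (-q))) ha hb (by ring)
  have c2 := hφcx.2 (Set.mem_univ (Function.update y j q))
    (Set.mem_univ (Function.update y j (-q))) hb ha (by ring)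
  rw [← e1] at c1
  rw [← e2] at c2
  simp only [smul_eq_mul] at c1 c2
  linarith

lemma aux_flip_sum {N : ℕ} (j : Fin N) (F G : (Fin N → Bool) → ℝ)
    (h : ∀ s, F s + F (Function.update s j (!s j)) ≤ G s + G (Function.update s j (!s j))) :
    ∑ s : Fin N → Bool, F s ≤ ∑ s : Fin N → Bool, G s := by
  have hinv : Function.Involutive (fun s : Fin N → Bool => Function.update s j (!s j)) := by
    intro s; funext i
    by_cases hij : i = j
    · rw [hij]; simp
    · simp [Function.update_of_ne hij]
  have hF : ∑ s : Fin N → Bool, F (Function.update s j (!s j)) = ∑ s : Fin N → Bool, F s :=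
    Fintype.sum_bijective _ hinv.bijective _ F (fun s => rfl)
  have hG : ∑ s : Fin N → Bool, G (Function.update s j (!s j)) = ∑ s : Fin N → Bool, G s :=
    Fintype.sum_bijective _ hinv.bijective _ G (fun s => rfl)
  have key := Finset.sum_le_sum (fun s (_ : s ∈ Finset.univ) => h s)
  rw [Finset.sum_add_distrib, Finset.sum_add_distrib] at key
  rw [hF, hG] at key
  linarith

lemma aux_step {N : ℕ} (φ : (Fin N → ℝ) → ℝ) (hφcx : ConvexOn ℝ Set.univ φ)
    (k0 j : Fin N) (hjk : j ≠ k0) (c : Fin N → ℝ) (d t : ℝ)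
    (ht0 : 0 ≤ t) (ht1 : t ≤ 1) (hcd : c j = t * d) :
    ∑ s : Fin N → Bool, φ (fun i => if i = k0 then c i else (if s i then (1:ℝ) else -1) * c i) ≤
    ∑ s : Fin N → Bool, φ (fun i => if i = k0 then Function.update c j d i
        else (if s i then (1:ℝ) else -1) * Function.update c j d i) := by
  apply aux_flip_sum j
  intro s
  set y : Fin N → ℝ := fun i => if i = k0 then c i else (if s i then (1:ℝ) else -1) * c i with hy
  set sgj : ℝ := if s j then 1 else -1 with hsgj
  have hyj : y j = sgj * c j := by rw [hy]; simp only [if_neg hjk]; rfl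
  have A1 : φ y = φ (Function.update y j (sgj * c j)) := by
    rw [← hyj, Function.update_eq_self]
  have A2 : (fun i => if i = k0 then c i
        else (if Function.update s j (!s j) i then (1:ℝ) else -1) * c i)
      = Function.update y j (-(sgj * c j)) := by
    funext i
    by_cases hij : i = j
    · rw [hij]
      simp only [if_neg hjk, Function.update_self, hsgj]
      cases hsj : s j <;> simp [hsj]
    · simp only [Function.update_of_ne hij, hy]
  have A3 : (fun i => if i = k0 then Function.update c j d i
        else (if s i then (1:ℝ) else -1) * Function.update c j d i)
      = Function.update y j (sgj * d) := by
    funext i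
    by_cases hij : i = j
    · rw [hij]
      simp only [if_neg hjk, Function.update_self, hsgj]
    · simp only [Function.update_of_ne hij, hy]
  have A4 : (fun i => if i = k0 then Function.update c j d i
        else (if Function.update s j (!s j) i then (1:ℝ) else -1) * Function.update c j d i)
      = Function.update y j (-(sgj * d)) := by
    funext i
    by_cases hij : i = j
    · rw [hij]
      simp only [if_neg hjk, Function.update_self, hsgj]
      cases hsj : s j <;> simp [hsj]
    · simp only [Function.update_of_ne hij, hy]
  rw [A2, A3, A4, A1]
  exact aux_pair φ hφcx y j ht0 ht1 (by rw [hcd]; ring)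

lemma aux_signs_mono {N : ℕ} (φ : (Fin N → ℝ) → ℝ) (hφcx : ConvexOn ℝ Set.univ φ)
    (k0 : Fin N) (γ δ : Fin N → ℝ) (hk : γ k0 = δ k0)
    (h : ∀ j, ∃ t : ℝ, 0 ≤ t ∧ t ≤ 1 ∧ γ j = t * δ j) :
    ∑ s : Fin N → Bool, φ (fun j => if j = k0 then γ j else (if s j then (1:ℝ) else -1) * γ j) ≤
    ∑ s : Fin N → Bool, φ (fun j => if j = k0 then δ j else (if s j then (1:ℝ) else -1) * δ j) := by
  classical
  have main : ∀ T : Finset (Fin N),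
      ∑ s : Fin N → Bool, φ (fun j => if j = k0 then γ j else (if s j then (1:ℝ) else -1) * γ j) ≤
      ∑ s : Fin N → Bool, φ (fun j => if j = k0 then (if j ∈ T then δ j else γ j)
          else (if s j then (1:ℝ) else -1) * (if j ∈ T then δ j else γ j)) := by
    intro T
    induction T using Finset.induction with
    | empty => simp
    | @insert j T hj ih =>
      by_cases hjk : j = k0
      · have hcc : ∀ i : Fin N,
            (if i ∈ insert j T then δ i else γ i) = (if i ∈ T then δ i else γ i) := by
          intro i
          by_cases hiT : i ∈ T
          · simp [Finset.mem_insert, hiT]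
          · by_cases hij : i = j
            · rw [if_pos (Finset.mem_insert.2 (Or.inl hij)), if_neg hiT, hij, hjk]
              exact hk.symm
            · simp [Finset.mem_insert, hij, hiT]
        have hsum_eq : (∑ s : Fin N → Bool, φ (fun i => if i = k0 then (if i ∈ T then δ i else γ i)
              else (if s i then (1:ℝ) else -1) * (if i ∈ T then δ i else γ i)))
            = ∑ s : Fin N → Bool, φ (fun i => if i = k0 then (if i ∈ insert j T then δ i else γ i)
              else (if s i then (1:ℝ) else -1) * (if i ∈ insert j T then δ i else γ i)) :=
          Finset.sum_congr rfl fun s _ => congrArg φ (funext fun i => by rw [hcc i])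
        exact ih.trans (le_of_eq hsum_eq)
      · obtain ⟨t, ht0, ht1, hγδ⟩ := h j
        have hupd : ∀ i : Fin N, (if i ∈ insert j T then δ i else γ i)
            = Function.update (fun i => if i ∈ T then δ i else γ i) j (δ j) i := by
          intro i
          by_cases hij : i = j
          · rw [if_pos (Finset.mem_insert.2 (Or.inl hij)), hij, Function.update_self]
          · rw [Function.update_of_ne hij]
            simp [Finset.mem_insert, hij]
        have hsum_eq : (∑ s : Fin N → Bool,
              φ (fun i => if i = k0 then (if i ∈ insert j T then δ i else γ i)
                else (if s i then (1:ℝ) else -1) * (if i ∈ insert j T then δ i else γ i)))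
            = ∑ s : Fin N → Bool,
              φ (fun i => if i = k0
                  then Function.update (fun i => if i ∈ T then δ i else γ i) j (δ j) i
                else (if s i then (1:ℝ) else -1) *
                  Function.update (fun i => if i ∈ T then δ i else γ i) j (δ j) i) :=
          Finset.sum_congr rfl fun s _ => congrArg φ (funext fun i => by rw [hupd i])
        have hcj : (if j ∈ T then δ j else γ j) = t * δ j := by
          rw [if_neg hj]; exact hγδ
        have hstep := aux_step φ hφcx k0 j hjk (fun i => if i ∈ T then δ i else γ i) (δ j) t
          ht0 ht1 hcj
        exact ih.trans (hstep.trans (le_of_eq hsum_eq.symm))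
  have hfin := main Finset.univ
  simpa using hfin

/-- sign vector as a real function on ℕ -/
def auxcs (n : ℕ) (s : Fin (n+1) → Bool) (m : ℕ) : ℝ :=
  if h : m < n+1 then (if s ⟨m, h⟩ then 1 else -1) else 1

lemma auxcs_pm (n : ℕ) (s : Fin (n+1) → Bool) (m : ℕ) : auxcs n s m = 1 ∨ auxcs n s m = -1 := by
  unfold auxcs; split_ifs <;> simp

/-- the vector (X_0, ..., X_n) when innovation k is replaced by x and the other
innovations are sign-flipped according to s -/
def auxVec (g : (ℕ → ℝ) → ℕ → ℝ) (k n : ℕ) (e : ℕ → ℝ) (x : ℝ)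
    (s : Fin (n+1) → Bool) : Fin (n+1) → ℝ :=
  fun j => g (fun m => if m = k then x else auxcs n s m * e m) j *
    (if (j : ℕ) = k then x else auxcs n s (j : ℕ) * e (j : ℕ))

/-- substituted innovation vector built from a finite vector -/
def auxEu (k n : ℕ) (x : ℝ) (u : Fin (n+1) → ℝ) : ℕ → ℝ :=
  fun m => if m = k then x else if h : m < n+1 then u ⟨m, h⟩ else 0

section model

variable (f : ℝ → ℝ → ℝ)
    (hf_mono : MonotoneOn (fun p : ℝ × ℝ => f p.1 p.2) (Set.Ici 0 ×ˢ Set.Ici 0))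
    (hf_cx1 : ∀ y ∈ Set.Ici (0:ℝ), ConvexOn ℝ (Set.Ici (0:ℝ)) (fun x => f x y))
    (hf_cx2 : ∀ x ∈ Set.Ici (0:ℝ), ConvexOn ℝ (Set.Ici (0:ℝ)) (fun y => f x y))
    (hf_nonneg : ∀ x y, 0 ≤ x → 0 ≤ y → 0 ≤ f x y)
    (s0 : ℝ) (hs0 : 0 ≤ s0)
    (g : (ℕ → ℝ) → ℕ → ℝ)
    (hg0 : ∀ v, g v 0 = s0)
    (hgrec : ∀ v j, g v (j + 1) = f |v j| (g v j))

include hs0 hg0 hgrec hf_nonneg in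
lemma aux_g_nonneg : ∀ (v : ℕ → ℝ) (m : ℕ), 0 ≤ g v m := by
  intro v m
  induction m with
  | zero => rw [hg0]; exact hs0
  | succ m ih => rw [hgrec]; exact hf_nonneg _ _ (abs_nonneg _) ih

include hg0 hgrec in
lemma aux_g_abs : ∀ (v w : ℕ → ℝ) (m : ℕ), (∀ i, i < m → |v i| = |w i|) → g v m = g w m := by
  intro v w m
  induction m with
  | zero => intro _; rw [hg0, hg0]
  | succ m ih =>
    intro h
    rw [hgrec, hgrec, h m (Nat.lt_succ_self m),
      ih (fun i hi => h i (hi.trans (Nat.lt_succ_self m)))]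

include hg0 hgrec in
lemma aux_g_congr : ∀ (v w : ℕ → ℝ) (m : ℕ), (∀ i, i < m → v i = w i) → g v m = g w m :=
  fun v w m h => aux_g_abs f s0 g hg0 hgrec v w m (fun i hi => by rw [h i hi])

include hg0 hgrec in
lemma aux_g_const (k : ℕ) (e : ℕ → ℝ) :
    ∀ (m : ℕ), m ≤ k → ∀ (x y : ℝ),
      g (fun m' => if m' = k then x else e m') m
        = g (fun m' => if m' = k then y else e m') m := by
  intro m
  induction m with
  | zero => intro _ x y; rw [hg0, hg0]
  | succ m ih =>
    intro hm x y
    have hmk : m ≠ k := fun h => by omega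
    rw [hgrec, hgrec]
    simp only [if_neg hmk]
    rw [ih (by omega) x y]

include hf_mono hf_cx1 hf_cx2 hf_nonneg hs0 hg0 hgrec in
lemma aux_g_convex (k : ℕ) (e : ℕ → ℝ) (a b θ η : ℝ)
    (hθ : 0 ≤ θ) (hη : 0 ≤ η) (hθη : θ + η = 1) :
    ∀ (m : ℕ), k < m →
      g (fun m' => if m' = k then θ * a + η * b else e m') m ≤
        θ * g (fun m' => if m' = k then a else e m') m +
        η * g (fun m' => if m' = k then b else e m') m := by
  have hnn := aux_g_nonneg f hf_nonneg s0 hs0 g hg0 hgrec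
  have hmono2 : ∀ {u w u' w' : ℝ}, 0 ≤ u → 0 ≤ w → u ≤ u' → w ≤ w' → f u w ≤ f u' w' :=
    fun {u w u' w'} hu hw h1 h2 => hf_mono (Set.mem_prod.2 ⟨Set.mem_Ici.2 hu, Set.mem_Ici.2 hw⟩)
      (Set.mem_prod.2 ⟨Set.mem_Ici.2 (hu.trans h1), Set.mem_Ici.2 (hw.trans h2)⟩)
      (Prod.mk_le_mk.2 ⟨h1, h2⟩)
  intro m hm
  induction m with
  | zero => omega
  | succ m ih =>
    rw [hgrec, hgrec, hgrec]
    rcases Nat.lt_or_ge k m with hkm | hkm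
    · have hmk : m ≠ k := by omega
      simp only [if_neg hmk]
      have hIH := ih hkm
      have h1 : f |e m| (g (fun m' => if m' = k then θ * a + η * b else e m') m) ≤
          f |e m| (θ * g (fun m' => if m' = k then a else e m') m +
            η * g (fun m' => if m' = k then b else e m') m) :=
        hmono2 (abs_nonneg _) (hnn _ _) le_rfl hIH
      have h2 := (hf_cx2 |e m| (Set.mem_Ici.2 (abs_nonneg _))).2
        (Set.mem_Ici.2 (hnn (fun m' => if m' = k then a else e m') m))
        (Set.mem_Ici.2 (hnn (fun m' => if m' = k then b else e m') m)) hθ hη hθη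
      simp only [smul_eq_mul] at h2
      exact h1.trans h2
    · have hmk : m = k := by omega
      subst hmk
      simp only [if_pos rfl]
      have hconst := aux_g_const f s0 g hg0 hgrec m e m le_rfl
      have hCa : g (fun m' => if m' = m then θ * a + η * b else e m') m =
          g (fun m' => if m' = m then a else e m') m := hconst _ _
      have hCb : g (fun m' => if m' = m then b else e m') m =
          g (fun m' => if m' = m then a else e m') m := hconst _ _
      rw [hCa, hCb]
      set C := g (fun m' => if m' = m then a else e m') m with hCdef
      have hC0 : 0 ≤ C := hnn _ _
      have habs : |θ * a + η * b| ≤ θ * |a| + η * |b| := by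
        calc |θ * a + η * b| ≤ |θ * a| + |η * b| := abs_add_le _ _
          _ = θ * |a| + η * |b| := by rw [abs_mul, abs_mul, abs_of_nonneg hθ, abs_of_nonneg hη]
      have h1 : f |θ * a + η * b| C ≤ f (θ * |a| + η * |b|) C :=
        hmono2 (abs_nonneg _) hC0 habs le_rfl
      have h2 := (hf_cx1 C (Set.mem_Ici.2 hC0)).2
        (Set.mem_Ici.2 (abs_nonneg a)) (Set.mem_Ici.2 (abs_nonneg b)) hθ hη hθη
      simp only [smul_eq_mul] at h2
      exact h1.trans h2

include hf_mono hf_cx1 hf_cx2 hf_nonneg hs0 hg0 hgrec in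
lemma aux_pointwise (n k : ℕ) (hk : k ≤ n)
    (φ : (Fin (n+1) → ℝ) → ℝ) (hφcx : ConvexOn ℝ Set.univ φ)
    (e : ℕ → ℝ) (a b θ η : ℝ) (hθ : 0 ≤ θ) (hη : 0 ≤ η) (hθη : θ + η = 1) :
    ∑ s : Fin (n+1) → Bool, φ (auxVec g k n e (θ * a + η * b) s) ≤
      θ * ∑ s : Fin (n+1) → Bool, φ (auxVec g k n e a s) +
      η * ∑ s : Fin (n+1) → Bool, φ (auxVec g k n e b s) := by
  classical
  have aux_g_nonneg' := aux_g_nonneg f hf_nonneg s0 hs0 g hg0 hgrec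
  have aux_g_abs' := aux_g_abs f s0 g hg0 hgrec
  have aux_g_const' := aux_g_const f s0 g hg0 hgrec
  have aux_g_convex' := aux_g_convex f hf_mono hf_cx1 hf_cx2 hf_nonneg s0 hs0 g hg0 hgrec
  set k0 : Fin (n+1) := ⟨k, by omega⟩ with hk0
  set σ : ℝ → ℕ → ℝ := fun x m => g (fun m' => if m' = k then x else e m') m with hσ
  set γ : ℝ → Fin (n+1) → ℝ := fun x j =>
    if j = k0 then σ x k * x else σ x (j : ℕ) * e (j : ℕ) with hγ
  have hgflip : ∀ (x : ℝ) (s : Fin (n+1) → Bool) (m : ℕ),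
      g (fun m' => if m' = k then x else auxcs n s m' * e m') m = σ x m := by
    intro x s m
    apply aux_g_abs'
    intro i _
    by_cases hik : i = k
    · rw [if_pos hik, if_pos hik]
    · rw [if_neg hik, if_neg hik, abs_mul]
      have : |auxcs n s i| = 1 := by
        unfold auxcs
        split_ifs <;> norm_num
      rw [this, one_mul]
  have hjk_iff : ∀ j : Fin (n+1), (j : ℕ) = k ↔ j = k0 := by
    intro j; rw [hk0, Fin.ext_iff]
  have hform : ∀ (x : ℝ) (s : Fin (n+1) → Bool),
      auxVec g k n e x s =
        fun j => if j = k0 then γ x j else (if s j then (1:ℝ) else -1) * γ x j := by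
    intro x s
    funext j
    unfold auxVec
    rw [hgflip x s]
    by_cases hj : j = k0
    · have hjn : (j : ℕ) = k := (hjk_iff j).2 hj
      rw [if_pos hjn, if_pos hj, hγ]
      simp only [if_pos hj, hjn]
    · have hjn : ¬(j : ℕ) = k := fun h => hj ((hjk_iff j).1 h)
      rw [if_neg hjn, if_neg hj, hγ]
      simp only [if_neg hj]
      have hcs : auxcs n s (j : ℕ) = if s j then (1:ℝ) else -1 := by
        unfold auxcs
        rw [dif_pos j.isLt]
      rw [hcs]
      ring
  set δ : Fin (n+1) → ℝ := fun j => θ * γ a j + η * γ b j with hδ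
  have hconstk : ∀ x y : ℝ, σ x k = σ y k := fun x y => aux_g_const' k e k le_rfl x y
  have hγk0 : ∀ x : ℝ, γ x k0 = σ x k * x := fun x => by simp only [hγ, if_pos rfl]
  have hγj : ∀ (x : ℝ) (j : Fin (n+1)), j ≠ k0 → γ x j = σ x (j : ℕ) * e (j : ℕ) :=
    fun x j hj => by simp only [hγ, if_neg hj]
  have step1 : ∑ s : Fin (n+1) → Bool,
        φ (fun j => if j = k0 then γ (θ * a + η * b) j
          else (if s j then (1:ℝ) else -1) * γ (θ * a + η * b) j) ≤
      ∑ s : Fin (n+1) → Bool,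
        φ (fun j => if j = k0 then δ j else (if s j then (1:ℝ) else -1) * δ j) := by
    apply aux_signs_mono φ hφcx k0
    · have hδk0 : δ k0 = θ * γ a k0 + η * γ b k0 := rfl
      rw [hδk0, hγk0, hγk0, hγk0, hconstk a (θ * a + η * b), hconstk b (θ * a + η * b)]
      ring
    · intro j
      by_cases hj : j = k0
      · refine ⟨1, zero_le_one, le_rfl, ?_⟩
        rw [one_mul, hj]
        have hδk0 : δ k0 = θ * γ a k0 + η * γ b k0 := rfl
        rw [hδk0, hγk0, hγk0, hγk0, hconstk a (θ * a + η * b), hconstk b (θ * a + η * b)]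
        ring
      · have hjn : ¬(j : ℕ) = k := fun h => hj ((hjk_iff j).1 h)
        have hγx : ∀ x, γ x j = σ x (j : ℕ) * e (j : ℕ) := fun x => hγj x j hj
        have hδj' : δ j = θ * γ a j + η * γ b j := rfl
        rcases Nat.lt_or_ge k (j : ℕ) with hkj | hkj
        · have hA0 : 0 ≤ σ (θ * a + η * b) (j : ℕ) := aux_g_nonneg' _ _
          have hAB : σ (θ * a + η * b) (j : ℕ) ≤ θ * σ a (j : ℕ) + η * σ b (j : ℕ) :=
            aux_g_convex' k e a b θ η hθ hη hθη (j : ℕ) hkj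
          set A := σ (θ * a + η * b) (j : ℕ) with hA
          set B := θ * σ a (j : ℕ) + η * σ b (j : ℕ) with hB
          have hδj : δ j = B * e (j : ℕ) := by
            rw [hδj', hγx a, hγx b, hB]; ring
          by_cases hB0 : B = 0
          · refine ⟨1, zero_le_one, le_rfl, ?_⟩
            have hA0' : A = 0 := le_antisymm (hB0 ▸ hAB) hA0
            rw [hγx, ← hA, hA0', hδj, hB0]
            ring
          · refine ⟨A / B, div_nonneg hA0 (hA0.trans hAB),
              div_le_one_of_le₀ hAB (hA0.trans hAB), ?_⟩
            rw [hγx, ← hA, hδj]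
            field_simp
        · refine ⟨1, zero_le_one, le_rfl, ?_⟩
          have hconstj : ∀ x y : ℝ, σ x (j : ℕ) = σ y (j : ℕ) :=
            fun x y => aux_g_const' k e (j : ℕ) hkj x y
          rw [one_mul, hγx, hδj', hγx a, hγx b,
            hconstj a (θ * a + η * b), hconstj b (θ * a + η * b)]
          linear_combination (-(σ (θ * a + η * b) (j : ℕ) * e (j : ℕ))) * hθη
  have step2 : ∑ s : Fin (n+1) → Bool,
        φ (fun j => if j = k0 then δ j else (if s j then (1:ℝ) else -1) * δ j) ≤
      θ * ∑ s : Fin (n+1) → Bool,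
        φ (fun j => if j = k0 then γ a j else (if s j then (1:ℝ) else -1) * γ a j) +
      η * ∑ s : Fin (n+1) → Bool,
        φ (fun j => if j = k0 then γ b j else (if s j then (1:ℝ) else -1) * γ b j) := by
    rw [Finset.mul_sum, Finset.mul_sum, ← Finset.sum_add_distrib]
    apply Finset.sum_le_sum
    intro s _
    have hcomb : (fun j => if j = k0 then δ j else (if s j then (1:ℝ) else -1) * δ j)
        = θ • (fun j => if j = k0 then γ a j else (if s j then (1:ℝ) else -1) * γ a j)
          + η • (fun j => if j = k0 then γ b j else (if s j then (1:ℝ) else -1) * γ b j) := by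
      funext j
      simp only [Pi.add_apply, Pi.smul_apply, smul_eq_mul, hδ]
      by_cases hj : j = k0
      · simp only [if_pos hj]
      · simp only [if_neg hj]; ring
    calc φ (fun j => if j = k0 then δ j else (if s j then (1:ℝ) else -1) * δ j)
        = φ (θ • _ + η • _) := by rw [hcomb]
      _ ≤ θ • φ _ + η • φ _ := hφcx.2 (Set.mem_univ _) (Set.mem_univ _) hθ hη hθη
      _ = _ := by simp only [smul_eq_mul]
  have hrw : ∀ x, (∑ s : Fin (n+1) → Bool, φ (auxVec g k n e x s))
      = ∑ s : Fin (n+1) → Bool,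
          φ (fun j => if j = k0 then γ x j else (if s j then (1:ℝ) else -1) * γ x j) :=
    fun x => Finset.sum_congr rfl fun s _ => congrArg φ (hform x s)
  rw [hrw, hrw, hrw]
  exact step1.trans step2

end model

/-- joint law of a sign-flipped independent symmetric family is the product of the marginals -/
lemma aux_map {Ω : Type*} [MeasurableSpace Ω] (μ : Measure Ω) [IsProbabilityMeasure μ]
    (ε : ℕ → Ω → ℝ) (hεmeas : ∀ j, Measurable (ε j))
    (hindep : iIndepFun ε μ)
    (hsymm : ∀ j, Measure.map (ε j) μ = Measure.map (fun ω => -(ε j ω)) μ)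
    (n : ℕ) (c : ℕ → ℝ) (hc : ∀ m, c m = 1 ∨ c m = -1) :
    Measure.map (fun ω => fun i : Fin (n+1) => c (i : ℕ) * ε (i : ℕ) ω) μ
      = Measure.pi (fun i : Fin (n+1) => Measure.map (ε (i : ℕ)) μ) := by
  haveI : ∀ i : Fin (n+1), IsProbabilityMeasure (Measure.map (ε (i : ℕ)) μ) :=
    fun i => Measure.isProbabilityMeasure_map (hεmeas (i : ℕ)).aemeasurable
  refine (Measure.pi_eq fun A hA => ?_).symm
  have hTmeas : Measurable (fun ω => fun i : Fin (n+1) => c (i : ℕ) * ε (i : ℕ) ω) :=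
    measurable_pi_lambda _ fun i => (hεmeas (i : ℕ)).const_mul _
  rw [Measure.map_apply hTmeas (MeasurableSet.univ_pi hA)]
  set Bs : ℕ → Set ℝ := fun m => (fun r => c m * r) ⁻¹'
    (if h : m < n+1 then A ⟨m, h⟩ else Set.univ) with hBs
  have hpre : (fun ω => fun i : Fin (n+1) => c (i : ℕ) * ε (i : ℕ) ω) ⁻¹' (Set.pi Set.univ A)
      = ⋂ m ∈ Finset.range (n+1), ε m ⁻¹' Bs m := by
    ext ω
    simp only [Set.mem_preimage, Set.mem_pi, Set.mem_univ, true_implies, Set.mem_iInter,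
      Finset.mem_range, hBs]
    constructor
    · intro hω m hm
      simp only [dif_pos hm]
      exact hω ⟨m, hm⟩
    · intro hω i
      have h := hω (i : ℕ) i.isLt
      simp only [dif_pos i.isLt] at h
      exact h
  rw [hpre]
  have hsets : ∀ m, m ∈ Finset.range (n+1) → MeasurableSet (Bs m) := by
    intro m hm
    rw [hBs]
    simp only [dif_pos (Finset.mem_range.1 hm)]
    exact (measurable_id.const_mul (c m)) (hA _)
  rw [hindep.measure_inter_preimage_eq_mul (Finset.range (n+1)) hsets]
  rw [← Fin.prod_univ_eq_prod_range (fun m => μ (ε m ⁻¹' Bs m)) (n+1)]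
  apply Finset.prod_congr rfl
  intro i _
  have hBi : Bs (i : ℕ) = (fun r => c (i : ℕ) * r) ⁻¹' A i := by
    rw [hBs]; simp only [dif_pos i.isLt]
  rw [hBi]
  rcases hc (i : ℕ) with h1 | h1
  · rw [Measure.map_apply (hεmeas (i : ℕ)) (hA i)]
    congr 1
    ext ω
    simp [h1]
  · rw [hsymm (i : ℕ), Measure.map_apply (f := fun ω => -ε (i : ℕ) ω) ((hεmeas (i : ℕ)).neg) (hA i)]
    congr 1
    ext ω
    simp [h1]

end auxiliary

/-- in model M1 with independent symmetric innovations, for `φ : ℝ^{n+1} → ℝ`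
supermodular and convex, the function `h_k(x) = E[φ(X₀, …, X_n) | ε_k = x]` is convex in
`x`.  Here `X_j = σ_j ε_j`, `σ₀ = s₀`, `σ_{j+1} = f(|ε_j|, σ_j)`; by independence the
conditional expectation is obtained by substituting the constant `x` for `ε_k` and
integrating over the other innovations. -/
theorem stmt14 {Ω : Type*} [MeasurableSpace Ω] (μ : Measure Ω) [IsProbabilityMeasure μ]
    (f : ℝ → ℝ → ℝ)
    (hf_mono : MonotoneOn (fun p : ℝ × ℝ => f p.1 p.2) (Set.Ici 0 ×ˢ Set.Ici 0))
    (hf_cx1 : ∀ y ∈ Set.Ici (0:ℝ), ConvexOn ℝ (Set.Ici (0:ℝ)) (fun x => f x y))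
    (hf_cx2 : ∀ x ∈ Set.Ici (0:ℝ), ConvexOn ℝ (Set.Ici (0:ℝ)) (fun y => f x y))
    (hf_nonneg : ∀ x y, 0 ≤ x → 0 ≤ y → 0 ≤ f x y)
    (ε : ℕ → Ω → ℝ) (hεmeas : ∀ j, Measurable (ε j))
    (hindep : iIndepFun ε μ)
    (hsymm : ∀ j, Measure.map (ε j) μ = Measure.map (fun ω => -(ε j ω)) μ)
    (n k : ℕ) (hk : k ≤ n)
    (s0 : ℝ) (hs0 : 0 ≤ s0)
    (φ : (Fin (n + 1) → ℝ) → ℝ) (hφcx : ConvexOn ℝ univ φ) (hφsm : Supermodular φ)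
    -- the volatility functional: `g v j = σ_j` when the innovations take the values `v`
    (g : (ℕ → ℝ) → ℕ → ℝ)
    (hg0 : ∀ v, g v 0 = s0)
    (hgrec : ∀ v j, g v (j + 1) = f |v j| (g v j))
    -- the innovation vector with `ε_k` replaced by the constant `x`
    (inn : ℝ → Ω → ℕ → ℝ)
    (hinn : ∀ x ω j, inn x ω j = if j = k then x else ε j ω)
    (hint : ∀ x : ℝ,
      Integrable (fun ω => φ (fun j : Fin (n + 1) => g (inn x ω) j * inn x ω j)) μ) :
    ConvexOn ℝ univ (fun x =>
      ∫ ω, φ (fun j : Fin (n + 1) => g (inn x ω) j * inn x ω j) ∂μ) := by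
  classical
  have hg_nn := aux_g_nonneg f hf_nonneg s0 hs0 g hg0 hgrec
  have hg_congr := aux_g_congr f s0 g hg0 hgrec
  -- continuity of φ
  have hφc : Continuous φ := by
    have h := hφcx.continuousOn isOpen_univ
    rwa [continuousOn_univ] at h
  -- continuity of the clamped f
  have hfQ : Continuous (fun p : ℝ × ℝ => f (max p.1 0) (max p.2 0)) :=
    (aux_cont f hf_mono hf_cx1 hf_cx2).comp_continuous
      ((continuous_fst.max continuous_const).prodMk (continuous_snd.max continuous_const))
      (fun p => Set.mem_prod.2 ⟨Set.mem_Ici.2 (le_max_right _ _),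
        Set.mem_Ici.2 (le_max_right _ _)⟩)
  -- the deterministic functional on the path space
  set Φ : ℝ → (Fin (n+1) → ℝ) → ℝ := fun x u =>
    φ (fun j : Fin (n+1) => g (auxEu k n x u) j * auxEu k n x u (j : ℕ)) with hΦ
  -- measurability of Φ x
  have hcoord : ∀ (x : ℝ) (m : ℕ), Measurable (fun u : Fin (n+1) → ℝ => auxEu k n x u m) := by
    intro x m
    unfold auxEu
    by_cases hmk : m = k
    · simp only [if_pos hmk]; exact measurable_const
    · simp only [if_neg hmk]
      by_cases hmn : m < n+1
      · simp only [dif_pos hmn]; exact measurable_pi_apply _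
      · simp only [dif_neg hmn]; exact measurable_const
  have hgmeas : ∀ (x : ℝ) (m : ℕ),
      Measurable (fun u : Fin (n+1) → ℝ => g (auxEu k n x u) m) := by
    intro x m
    induction m with
    | zero => simp only [hg0]; exact measurable_const
    | succ m ih =>
      simp only [hgrec]
      have heq : (fun u : Fin (n+1) → ℝ => f |auxEu k n x u m| (g (auxEu k n x u) m))
          = fun u => f (max |auxEu k n x u m| 0) (max (g (auxEu k n x u) m) 0) :=
        funext fun u => by rw [max_eq_left (abs_nonneg _), max_eq_left (hg_nn _ _)]
      rw [heq]
      exact hfQ.measurable.comp (((hcoord x m).abs).prodMk ih)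
  have hΦmeas : ∀ x : ℝ, Measurable (Φ x) := by
    intro x
    rw [hΦ]
    exact hφc.measurable.comp
      (measurable_pi_lambda _ fun j => ((hgmeas x (j : ℕ)).mul (hcoord x (j : ℕ))))
  -- measurability of the sign-flipped vectors
  have hT : ∀ c : ℕ → ℝ, Measurable (fun ω => fun i : Fin (n+1) => c (i : ℕ) * ε (i : ℕ) ω) :=
    fun c => measurable_pi_lambda _ fun i => (hεmeas (i : ℕ)).const_mul _
  have hν := aux_map μ ε hεmeas hindep hsymm n
  -- pointwise identifications
  have hφeq : ∀ (v w : ℕ → ℝ), (∀ m, m < n+1 → v m = w m) →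
      (fun j : Fin (n+1) => g v j * v (j : ℕ)) = (fun j : Fin (n+1) => g w j * w (j : ℕ)) := by
    intro v w hvw
    funext j
    rw [hg_congr v w (j : ℕ) (fun i hi => hvw i (hi.trans j.isLt)), hvw (j : ℕ) j.isLt]
  set s₁ : Fin (n+1) → Bool := fun _ => true with hs₁
  have hPT1 : ∀ (x : ℝ) (ω : Ω),
      Φ x (fun i : Fin (n+1) => auxcs n s₁ (i : ℕ) * ε (i : ℕ) ω)
        = φ (fun j : Fin (n+1) => g (inn x ω) j * inn x ω (j : ℕ)) := by
    intro x ω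
    rw [hΦ]
    apply congrArg φ
    apply hφeq
    intro m hm
    unfold auxEu
    rw [hinn x ω m]
    by_cases hmk : m = k
    · rw [if_pos hmk, if_pos hmk]
    · rw [if_neg hmk, if_neg hmk, dif_pos hm]
      have h1 : auxcs n s₁ m = 1 := by simp [auxcs, hs₁, hm]
      show auxcs n s₁ m * ε m ω = ε m ω
      rw [h1, one_mul]
  have hPTs : ∀ (x : ℝ) (s : Fin (n+1) → Bool) (ω : Ω),
      Φ x (fun i : Fin (n+1) => auxcs n s (i : ℕ) * ε (i : ℕ) ω)
        = φ (auxVec g k n (fun m => ε m ω) x s) := by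
    intro x s ω
    rw [hΦ]
    have hVec : auxVec g k n (fun m => ε m ω) x s
        = fun j : Fin (n+1) =>
            g (fun m => if m = k then x else auxcs n s m * ε m ω) j *
            (fun m => if m = k then x else auxcs n s m * ε m ω) (j : ℕ) := rfl
    rw [hVec]
    apply congrArg φ
    apply hφeq
    intro m hm
    unfold auxEu
    by_cases hmk : m = k
    · rw [if_pos hmk, if_pos hmk]
    · rw [if_neg hmk, if_neg hmk, dif_pos hm]
  haveI : ∀ i : Fin (n+1), IsProbabilityMeasure (Measure.map (ε (i : ℕ)) μ) :=
    fun i => Measure.isProbabilityMeasure_map (hεmeas (i : ℕ)).aemeasurable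
  have hIpi : ∀ x : ℝ,
      Integrable (Φ x) (Measure.pi (fun i : Fin (n+1) => Measure.map (ε (i : ℕ)) μ)) := by
    intro x
    rw [← hν (auxcs n s₁) (auxcs_pm n s₁)]
    rw [integrable_map_measure (hΦmeas x).aestronglyMeasurable
      (hT (auxcs n s₁)).aemeasurable]
    have heq : (Φ x ∘ fun ω => fun i : Fin (n+1) => auxcs n s₁ (i : ℕ) * ε (i : ℕ) ω)
        = fun ω => φ (fun j : Fin (n+1) => g (inn x ω) j * inn x ω (j : ℕ)) :=
      funext fun ω => hPT1 x ω
    rw [heq]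
    exact hint x
  have hIs : ∀ (x : ℝ) (s : Fin (n+1) → Bool),
      Integrable (fun ω => φ (auxVec g k n (fun m => ε m ω) x s)) μ := by
    intro x s
    have h1 : Integrable
        (Φ x ∘ fun ω => fun i : Fin (n+1) => auxcs n s (i : ℕ) * ε (i : ℕ) ω) μ := by
      rw [← integrable_map_measure (hΦmeas x).aestronglyMeasurable
        (hT (auxcs n s)).aemeasurable, hν (auxcs n s) (auxcs_pm n s)]
      exact hIpi x
    have heq : (Φ x ∘ fun ω => fun i : Fin (n+1) => auxcs n s (i : ℕ) * ε (i : ℕ) ω)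
        = fun ω => φ (auxVec g k n (fun m => ε m ω) x s) := funext fun ω => hPTs x s ω
    rwa [heq] at h1
  have hEq : ∀ (x : ℝ) (s : Fin (n+1) → Bool),
      ∫ ω, φ (auxVec g k n (fun m => ε m ω) x s) ∂μ
        = ∫ ω, φ (fun j : Fin (n+1) => g (inn x ω) j * inn x ω (j : ℕ)) ∂μ := by
    intro x s
    have e1 : ∀ s' : Fin (n+1) → Bool,
        ∫ ω, Φ x (fun i : Fin (n+1) => auxcs n s' (i : ℕ) * ε (i : ℕ) ω) ∂μ
          = ∫ u, Φ x u ∂(Measure.pi (fun i : Fin (n+1) => Measure.map (ε (i : ℕ)) μ)) := by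
      intro s'
      rw [← hν (auxcs n s') (auxcs_pm n s')]
      exact (integral_map (hT (auxcs n s')).aemeasurable
        (hΦmeas x).aestronglyMeasurable).symm
    calc ∫ ω, φ (auxVec g k n (fun m => ε m ω) x s) ∂μ
        = ∫ ω, Φ x (fun i : Fin (n+1) => auxcs n s (i : ℕ) * ε (i : ℕ) ω) ∂μ :=
          integral_congr_ae (Filter.EventuallyEq.of_eq (funext fun ω => (hPTs x s ω).symm))
      _ = ∫ u, Φ x u ∂(Measure.pi (fun i : Fin (n+1) => Measure.map (ε (i : ℕ)) μ)) := e1 s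
      _ = ∫ ω, Φ x (fun i : Fin (n+1) => auxcs n s₁ (i : ℕ) * ε (i : ℕ) ω) ∂μ := (e1 s₁).symm
      _ = ∫ ω, φ (fun j : Fin (n+1) => g (inn x ω) j * inn x ω (j : ℕ)) ∂μ :=
          integral_congr_ae (Filter.EventuallyEq.of_eq (funext fun ω => hPT1 x ω))
  -- now the convexity proof
  refine ⟨convex_univ, ?_⟩
  intro a _ b _ θ η hθ hη hθη
  simp only [smul_eq_mul]
  set c : ℝ := (Fintype.card (Fin (n+1) → Bool) : ℝ) with hc
  have hcpos : 0 < c := by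
    rw [hc]
    exact_mod_cast Fintype.card_pos
  have hsum_int : ∀ x : ℝ,
      ∫ ω, ∑ s : Fin (n+1) → Bool, φ (auxVec g k n (fun m => ε m ω) x s) ∂μ
        = c * ∫ ω, φ (fun j : Fin (n+1) => g (inn x ω) j * inn x ω (j : ℕ)) ∂μ := by
    intro x
    rw [integral_finset_sum _ (fun s _ => hIs x s)]
    rw [Finset.sum_congr rfl (fun s _ => hEq x s)]
    rw [Finset.sum_const, Finset.card_univ, nsmul_eq_mul, hc]
  have hpoint : ∀ ω : Ω,
      ∑ s : Fin (n+1) → Bool, φ (auxVec g k n (fun m => ε m ω) (θ * a + η * b) s)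
        ≤ θ * ∑ s : Fin (n+1) → Bool, φ (auxVec g k n (fun m => ε m ω) a s)
          + η * ∑ s : Fin (n+1) → Bool, φ (auxVec g k n (fun m => ε m ω) b s) :=
    fun ω => aux_pointwise f hf_mono hf_cx1 hf_cx2 hf_nonneg s0 hs0 g hg0 hgrec n k hk
      φ hφcx (fun m => ε m ω) a b θ η hθ hη hθη
  have hint_mid : Integrable (fun ω => ∑ s : Fin (n+1) → Bool,
      φ (auxVec g k n (fun m => ε m ω) (θ * a + η * b) s)) μ :=
    integrable_finset_sum _ (fun s _ => hIs (θ * a + η * b) s)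
  have hint_a : Integrable (fun ω => ∑ s : Fin (n+1) → Bool,
      φ (auxVec g k n (fun m => ε m ω) a s)) μ :=
    integrable_finset_sum _ (fun s _ => hIs a s)
  have hint_b : Integrable (fun ω => ∑ s : Fin (n+1) → Bool,
      φ (auxVec g k n (fun m => ε m ω) b s)) μ :=
    integrable_finset_sum _ (fun s _ => hIs b s)
  have hmono : ∫ ω, ∑ s : Fin (n+1) → Bool,
        φ (auxVec g k n (fun m => ε m ω) (θ * a + η * b) s) ∂μ
      ≤ ∫ ω, (θ * ∑ s : Fin (n+1) → Bool, φ (auxVec g k n (fun m => ε m ω) a s)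
          + η * ∑ s : Fin (n+1) → Bool, φ (auxVec g k n (fun m => ε m ω) b s)) ∂μ :=
    integral_mono hint_mid ((hint_a.const_mul θ).add (hint_b.const_mul η)) hpoint
  rw [integral_add (hint_a.const_mul θ) (hint_b.const_mul η),
    integral_const_mul, integral_const_mul] at hmono
  rw [hsum_int (θ * a + η * b), hsum_int a, hsum_int b] at hmono
  have hfin : c * ∫ ω, φ (fun j : Fin (n+1) =>
        g (inn (θ * a + η * b) ω) j * inn (θ * a + η * b) ω (j : ℕ)) ∂μ
      ≤ c * (θ * ∫ ω, φ (fun j : Fin (n+1) => g (inn a ω) j * inn a ω (j : ℕ)) ∂μ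
        + η * ∫ ω, φ (fun j : Fin (n+1) => g (inn b ω) j * inn b ω (j : ℕ)) ∂μ) := by
    calc c * _ ≤ θ * (c * _) + η * (c * _) := hmono
      _ = c * (θ * _ + η * _) := by ring
  exact le_of_mul_le_mul_left hfin hcpos
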